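/- Let p ≥ 2 be an integer and s ∈ (0, 3/2). If s ∈ (0, 1/2) ∪ (1, 3/2), then t_p(s) < t_{p+1}(s) < 0. If s ∈ (1/2, 1), then t_p(s) > t_{p+1}(s) > 0. If s = 1, then t_p(s) = 0. -/

import Mathlib

/-- `t_p(s)`, with the convention `0^(3-2s) = 0` (automatic for `rpow`). -/
noncomputable def tFn (s : ℝ) (p : ℕ) : ℝ :=
  |(p : ℝ) - 2| ^ (3 - 2 * s) - 4 * |(p : ℝ) - 1| ^ (3 - 2 * s) + 6 * (p : ℝ) ^ (3 - 2 * s)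
    - 4 * ((p : ℝ) + 1) ^ (3 - 2 * s) + ((p : ℝ) + 2) ^ (3 - 2 * s)

/-- The forward difference operator. -/
noncomputable def Dop (f : ℝ → ℝ) : ℝ → ℝ := fun x => f (x + 1) - f x

/-- Iterated forward differences. -/
noncomputable def Dk (k : ℕ) (f : ℝ → ℝ) : ℝ → ℝ := Dop^[k] f

lemma Dk_zero (f : ℝ → ℝ) : Dk 0 f = f := rfl

lemma Dk_succ (k : ℕ) (f : ℝ → ℝ) : Dk (k + 1) f = Dop (Dk k f) := by
  simp [Dk, Function.iterate_succ_apply']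

/-- Main induction: derivative and sign of iterated differences of `x ^ β` on `(0,∞)`. -/
lemma Dk_rpow (k : ℕ) : ∀ β : ℝ,
    (∀ x : ℝ, 0 < x →
      HasDerivAt (Dk k (fun y => y ^ β)) (β * Dk k (fun y => y ^ (β - 1)) x) x) ∧
    ((0 < ∏ i ∈ Finset.range k, (β - i)) → ∀ x : ℝ, 0 < x → 0 < Dk k (fun y => y ^ β) x) ∧
    (((∏ i ∈ Finset.range k, (β - i)) < 0) → ∀ x : ℝ, 0 < x → Dk k (fun y => y ^ β) x < 0) := by
  induction k with
  | zero =>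
    intro β
    refine ⟨fun x hx => ?_, fun _ x hx => ?_, fun h x hx => ?_⟩
    · simpa [Dk_zero] using Real.hasDerivAt_rpow_const (p := β) (Or.inl hx.ne')
    · simpa [Dk_zero] using Real.rpow_pos_of_pos hx β
    · norm_num at h
  | succ k ih =>
    intro β
    have hprod : (∏ i ∈ Finset.range (k + 1), (β - i))
        = (∏ i ∈ Finset.range k, ((β - 1) - i)) * β := by
      rw [Finset.prod_range_succ']
      push_cast
      congr 1
      · apply Finset.prod_congr rfl; intro i _; ring
      · simp
    have hderiv : ∀ x : ℝ, 0 < x →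
        HasDerivAt (Dk (k + 1) (fun y => y ^ β)) (β * Dk (k + 1) (fun y => y ^ (β - 1)) x) x := by
      intro x hx
      rw [Dk_succ]
      have h1 : HasDerivAt (fun x : ℝ => Dk k (fun y => y ^ β) (x + 1))
          (β * Dk k (fun y => y ^ (β - 1)) (x + 1) * 1) x :=
        HasDerivAt.comp x ((ih β).1 (x + 1) (by linarith)) ((hasDerivAt_id x).add_const 1)
      have h2 := (ih β).1 x hx
      have := h1.sub h2
      rw [Dk_succ]
      exact this.congr_deriv (by simp only [Dop]; ring)
    refine ⟨hderiv, ?_, ?_⟩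
    · intro hp x hx
      rw [hprod] at hp
      -- Dk k (·^β) is strictly monotone on (0,∞)
      have hmono : StrictMonoOn (Dk k (fun y => y ^ β)) (Set.Ioi 0) := by
        apply strictMonoOn_of_deriv_pos (convex_Ioi 0)
        · intro y hy
          exact ((ih β).1 y hy).continuousAt.continuousWithinAt
        · intro y hy
          rw [interior_Ioi] at hy
          rw [((ih β).1 y hy).deriv]
          rcases lt_trichotomy β 0 with hβ | hβ | hβ
          · have hπ : (∏ i ∈ Finset.range k, ((β - 1) - i)) < 0 := by
              by_contra h
              push_neg at h
              nlinarith
            exact mul_pos_of_neg_of_neg hβ ((ih (β - 1)).2.2 hπ y hy)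
          · simp [hβ] at hp
          · have hπ : 0 < ∏ i ∈ Finset.range k, ((β - 1) - i) := by
              by_contra h
              push_neg at h
              nlinarith
            exact mul_pos hβ ((ih (β - 1)).2.1 hπ y hy)
      rw [Dk_succ]
      have := hmono (Set.mem_Ioi.mpr hx) (Set.mem_Ioi.mpr (by linarith : (0:ℝ) < x + 1))
        (by linarith)
      simpa [Dop] using sub_pos.mpr this
    · intro hp x hx
      rw [hprod] at hp
      have hmono : StrictAntiOn (Dk k (fun y => y ^ β)) (Set.Ioi 0) := by
        apply strictAntiOn_of_deriv_neg (convex_Ioi 0)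
        · intro y hy
          exact ((ih β).1 y hy).continuousAt.continuousWithinAt
        · intro y hy
          rw [interior_Ioi] at hy
          rw [((ih β).1 y hy).deriv]
          rcases lt_trichotomy β 0 with hβ | hβ | hβ
          · have hπ : 0 < ∏ i ∈ Finset.range k, ((β - 1) - i) := by
              by_contra h
              push_neg at h
              nlinarith
            exact mul_neg_of_neg_of_pos hβ ((ih (β - 1)).2.1 hπ y hy)
          · simp [hβ] at hp
          · have hπ : (∏ i ∈ Finset.range k, ((β - 1) - i)) < 0 := by
              by_contra h
              push_neg at h
              nlinarith
            exact mul_neg_of_pos_of_neg hβ ((ih (β - 1)).2.2 hπ y hy)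
      rw [Dk_succ]
      have := hmono (Set.mem_Ioi.mpr hx) (Set.mem_Ioi.mpr (by linarith : (0:ℝ) < x + 1))
        (by linarith)
      simpa [Dop] using sub_neg.mpr this

lemma Dk4_eq (β x : ℝ) : Dk 4 (fun y => y ^ β) x
    = x ^ β - 4 * (x + 1) ^ β + 6 * (x + 2) ^ β - 4 * (x + 3) ^ β + (x + 4) ^ β := by
  show Dop (Dop (Dop (Dop (fun y => y ^ β)))) x = _
  simp only [Dop]
  have e1 : x + 1 + 1 = x + 2 := by ring
  have e2 : x + 1 + 1 + 1 = x + 3 := by ring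
  have e3 : x + 1 + 1 + 1 + 1 = x + 4 := by ring
  have e4 : x + 2 + 1 = x + 3 := by ring
  have e5 : x + 2 + 1 + 1 = x + 4 := by ring
  have e6 : x + 3 + 1 = x + 4 := by ring
  ring_nf

lemma Dk4_continuousOn (β : ℝ) (hβ : 0 < β) :
    ContinuousOn (Dk 4 (fun y => y ^ β)) (Set.Ici 0) := by
  have h : Continuous fun y : ℝ => y ^ β := Real.continuous_rpow_const hβ.le
  have : ContinuousOn (fun x : ℝ =>
      x ^ β - 4 * (x + 1) ^ β + 6 * (x + 2) ^ β - 4 * (x + 3) ^ β + (x + 4) ^ β)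
      (Set.Ici 0) := by
    apply Continuous.continuousOn
    fun_prop
  refine this.congr fun x _ => ?_
  rw [Dk4_eq]

lemma Dk4_strictMonoOn (β : ℝ) (hβ : 0 < β)
    (h5 : 0 < ∏ i ∈ Finset.range 5, (β - i)) :
    StrictMonoOn (Dk 4 (fun y => y ^ β)) (Set.Ici 0) := by
  apply strictMonoOn_of_deriv_pos (convex_Ici 0) (Dk4_continuousOn β hβ)
  intro x hx
  rw [interior_Ici] at hx
  rw [((Dk_rpow 4 β).1 x hx).deriv]
  have hπ : 0 < ∏ i ∈ Finset.range 4, ((β - 1) - i) := by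
    have : (∏ i ∈ Finset.range 5, (β - i))
        = (∏ i ∈ Finset.range 4, ((β - 1) - i)) * β := by
      simp [Finset.prod_range_succ]
      ring
    rw [this] at h5
    nlinarith
  exact mul_pos hβ ((Dk_rpow 4 (β - 1)).2.1 hπ x hx)

lemma Dk4_strictAntiOn (β : ℝ) (hβ : 0 < β)
    (h5 : (∏ i ∈ Finset.range 5, (β - i)) < 0) :
    StrictAntiOn (Dk 4 (fun y => y ^ β)) (Set.Ici 0) := by
  apply strictAntiOn_of_deriv_neg (convex_Ici 0) (Dk4_continuousOn β hβ)
  intro x hx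
  rw [interior_Ici] at hx
  rw [((Dk_rpow 4 β).1 x hx).deriv]
  have hπ : (∏ i ∈ Finset.range 4, ((β - 1) - i)) < 0 := by
    have : (∏ i ∈ Finset.range 5, (β - i))
        = (∏ i ∈ Finset.range 4, ((β - 1) - i)) * β := by
      simp [Finset.prod_range_succ]
      ring
    rw [this] at h5
    nlinarith
  exact mul_neg_of_pos_of_neg hβ ((Dk_rpow 4 (β - 1)).2.2 hπ x hx)

lemma tFn_eq_Dk4 (s : ℝ) (p : ℕ) (hp : 2 ≤ p) :
    tFn s p = Dk 4 (fun y => y ^ (3 - 2 * s)) ((p : ℝ) - 2) := by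
  have h2 : (2 : ℝ) ≤ (p : ℝ) := by exact_mod_cast hp
  rw [Dk4_eq]
  unfold tFn
  rw [abs_of_nonneg (by linarith : (0:ℝ) ≤ (p:ℝ) - 2),
    abs_of_nonneg (by linarith : (0:ℝ) ≤ (p:ℝ) - 1)]
  have e1 : (p : ℝ) - 2 + 1 = (p : ℝ) - 1 := by ring
  have e2 : (p : ℝ) - 2 + 2 = (p : ℝ) := by ring
  have e3 : (p : ℝ) - 2 + 3 = (p : ℝ) + 1 := by ring
  have e4 : (p : ℝ) - 2 + 4 = (p : ℝ) + 2 := by ring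
  rw [e1, e2, e3, e4]

theorem stmt6 (p : ℕ) (hp : 2 ≤ p) (s : ℝ) (hs : s ∈ Set.Ioo (0 : ℝ) (3 / 2)) :
    (s ∈ Set.Ioo (0 : ℝ) (1 / 2) ∪ Set.Ioo (1 : ℝ) (3 / 2) →
      tFn s p < tFn s (p + 1) ∧ tFn s (p + 1) < 0) ∧
    (s ∈ Set.Ioo (1 / 2 : ℝ) 1 → tFn s p > tFn s (p + 1) ∧ tFn s (p + 1) > 0) ∧
    (s = 1 → tFn s p = 0) := by
  obtain ⟨hs0, hs32⟩ := hs
  set β : ℝ := 3 - 2 * s with hβdef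
  have hβ : 0 < β := by rw [hβdef]; linarith
  have h2 : (2 : ℝ) ≤ (p : ℝ) := by exact_mod_cast hp
  have hT1 : tFn s p = Dk 4 (fun y => y ^ β) ((p : ℝ) - 2) := tFn_eq_Dk4 s p hp
  have hT2 : tFn s (p + 1) = Dk 4 (fun y => y ^ β) ((p : ℝ) - 1) := by
    have := tFn_eq_Dk4 s (p + 1) (by omega)
    rwa [show ((p + 1 : ℕ) : ℝ) - 2 = (p : ℝ) - 1 by push_cast; ring] at this
  have hmem2 : ((p : ℝ) - 2) ∈ Set.Ici (0 : ℝ) := by simp; linarith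
  have hmem1 : ((p : ℝ) - 1) ∈ Set.Ici (0 : ℝ) := by simp; linarith
  have hlt : (p : ℝ) - 2 < (p : ℝ) - 1 := by linarith
  have hpos1 : (0 : ℝ) < (p : ℝ) - 1 := by linarith
  have hprod4 : (∏ i ∈ Finset.range 4, (β - i)) = β * (β - 1) * (β - 2) * (β - 3) := by
    simp [Finset.prod_range_succ]
  have hprod5 : (∏ i ∈ Finset.range 5, (β - i))
      = β * (β - 1) * (β - 2) * (β - 3) * (β - 4) := by
    simp [Finset.prod_range_succ]
  refine ⟨?_, ?_, ?_⟩
  · intro hmem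
    have hb3 : β < 3 := by rw [hβdef]; linarith
    have h45 : (∏ i ∈ Finset.range 4, (β - i)) < 0 ∧ 0 < ∏ i ∈ Finset.range 5, (β - i) := by
      rw [hprod4, hprod5]
      rcases hmem with ⟨ha, hb⟩ | ⟨ha, hb⟩
      · have hb2 : 2 < β := by rw [hβdef]; linarith
        have hA : 0 < β * (β - 1) * (β - 2) :=
          mul_pos (mul_pos hβ (by linarith)) (by linarith)
        exact ⟨mul_neg_of_pos_of_neg hA (by linarith),
          by nlinarith [mul_neg_of_pos_of_neg hA (by linarith : β - 3 < 0)]⟩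
      · have hb1 : β < 1 := by rw [hβdef]; linarith
        have hA : 0 < (β - 1) * (β - 2) := mul_pos_of_neg_of_neg (by linarith) (by linarith)
        have hB : 0 < β * ((β - 1) * (β - 2)) := mul_pos hβ hA
        constructor
        · nlinarith [mul_neg_of_pos_of_neg hB (by linarith : β - 3 < 0)]
        · nlinarith [mul_pos hB (mul_pos_of_neg_of_neg (by linarith : β - 3 < 0) (by linarith : β - 4 < 0))]
    obtain ⟨h4, h5⟩ := h45
    constructor
    · rw [hT1, hT2]
      exact Dk4_strictMonoOn β hβ h5 hmem2 hmem1 hlt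
    · rw [hT2]
      exact (Dk_rpow 4 β).2.2 h4 _ hpos1
  · intro hmem
    obtain ⟨ha, hb⟩ := hmem
    have hb1 : 1 < β := by rw [hβdef]; linarith
    have hb2 : β < 2 := by rw [hβdef]; linarith
    have hA : 0 < β * (β - 1) := mul_pos hβ (by linarith)
    have h4 : 0 < ∏ i ∈ Finset.range 4, (β - i) := by
      rw [hprod4]
      nlinarith [mul_pos hA (mul_pos_of_neg_of_neg (by linarith : β - 2 < 0) (by linarith : β - 3 < 0))]
    have h5 : (∏ i ∈ Finset.range 5, (β - i)) < 0 := by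
      rw [hprod5]
      nlinarith [mul_neg_of_pos_of_neg (mul_pos hA (mul_pos_of_neg_of_neg (by linarith : β - 2 < 0) (by linarith : β - 3 < 0))) (by linarith : β - 4 < 0)]
    constructor
    · rw [hT1, hT2]
      exact Dk4_strictAntiOn β hβ h5 hmem2 hmem1 hlt
    · rw [hT2]
      exact (Dk_rpow 4 β).2.1 h4 _ hpos1
  · intro hs1
    subst hs1
    unfold tFn
    have h31 : (3 : ℝ) - 2 * 1 = 1 := by norm_num
    rw [h31, Real.rpow_one, Real.rpow_one, Real.rpow_one, Real.rpow_one, Real.rpow_one,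
      abs_of_nonneg (by linarith : (0:ℝ) ≤ (p:ℝ) - 2),
      abs_of_nonneg (by linarith : (0:ℝ) ≤ (p:ℝ) - 1)]
    ring
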